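/- For the Rudin-Shapiro sequence r and for all m ∈ ℕ and e < 2^(l-1) with l ≥ 1, we have r(2^l · m + e) = r(m) · r(e). -/

import Mathlib

def s2 (n : ℕ) : ℕ := (Nat.digits 2 n).sum

def t (n : ℕ) : ℤ := (-1) ^ (s2 n)

def f11 (n : ℕ) : ℕ :=
  ((Finset.range n).filter (fun i => n.testBit i ∧ n.testBit (i + 1))).card

def r (n : ℕ) : ℤ := (-1) ^ (f11 n)

lemma f11_eq_card (n N : ℕ) (h : n < 2 ^ N) :
    f11 n = ((Finset.range N).filter (fun i => n.testBit i ∧ n.testBit (i + 1))).card := by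
  unfold f11
  congr 1
  apply Finset.ext
  intro i
  simp only [Finset.mem_filter, Finset.mem_range]
  constructor
  · rintro ⟨hi, hb, hb'⟩
    refine ⟨?_, hb, hb'⟩
    by_contra hlt
    push_neg at hlt
    have : n < 2 ^ i := lt_of_lt_of_le h (Nat.pow_le_pow_right (by norm_num) hlt)
    simp [Nat.testBit_lt_two_pow this] at hb
  · rintro ⟨hi, hb, hb'⟩
    refine ⟨?_, hb, hb'⟩
    have h1 : 2 ^ i ≤ n := Nat.ge_two_pow_of_testBit hb
    exact lt_of_lt_of_le (Nat.lt_two_pow_self (n := i)) h1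

theorem rudin_shapiro_block_mult' (l m e : ℕ) (hl : 1 ≤ l) (he : e < 2 ^ (l - 1)) :
    r (2 ^ l * m + e) = r m * r e := by
  have hel : e < 2 ^ l := lt_of_lt_of_le he (Nat.pow_le_pow_right (by norm_num) (Nat.sub_le l 1))
  set n := 2 ^ l * m + e with hn
  set N := l + m with hN
  have hbit : ∀ j, n.testBit j = if j < l then e.testBit j else m.testBit (j - l) :=
    fun j => Nat.testBit_two_pow_mul_add m hel j
  have hnN : n < 2 ^ N := by
    have hm : m < 2 ^ m := Nat.lt_two_pow_self
    calc n < 2 ^ l * m + 2 ^ l := by omega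
      _ = 2 ^ l * (m + 1) := by ring
      _ ≤ 2 ^ l * 2 ^ m := by
          have : m + 1 ≤ 2 ^ m := hm
          exact Nat.mul_le_mul_left _ this
      _ = 2 ^ N := by rw [hN, pow_add]
  -- key: f11 n = f11 m + f11 e
  have key : f11 n = f11 m + f11 e := by
    rw [f11_eq_card n N hnN, f11_eq_card e (l - 1) he]
    have hsplit : Finset.range N = Finset.range (l-1) ∪ Finset.Ico (l-1) N := by
      rw [Finset.range_eq_Ico, Finset.range_eq_Ico, Finset.Ico_union_Ico_eq_Ico (Nat.zero_le _)]
      omega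
    rw [hsplit, Finset.filter_union, Finset.card_union_of_disjoint]
    · rw [Nat.add_comm (f11 m)]
      congr 1
      · -- range (l-1) part equals f11 e
        apply Finset.card_bij (fun i _ => i)
        · intro i hi
          simp only [Finset.mem_filter, Finset.mem_range] at hi ⊢
          obtain ⟨h1, hb, hb'⟩ := hi
          rw [hbit i, if_pos (by omega)] at hb
          rw [hbit (i+1), if_pos (by omega)] at hb'
          exact ⟨h1, hb, hb'⟩
        · intro a b _ _ h; exact h
        · intro j hj
          simp only [Finset.mem_filter, Finset.mem_range] at hj
          refine ⟨j, ?_, rfl⟩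
          simp only [Finset.mem_filter, Finset.mem_range]
          obtain ⟨h1, hb, hb'⟩ := hj
          rw [hbit j, if_pos (by omega), hbit (j+1), if_pos (by omega)]
          exact ⟨h1, hb, hb'⟩
      · -- Ico part equals f11 m
        have hIco : (Finset.Ico (l-1) N).filter (fun i => n.testBit i ∧ n.testBit (i + 1))
            = (Finset.Ico l N).filter (fun i => n.testBit i ∧ n.testBit (i + 1)) := by
          apply Finset.ext
          intro i
          simp only [Finset.mem_filter, Finset.mem_Ico]
          constructor
          · rintro ⟨⟨h1, h2⟩, hb, hb'⟩
            refine ⟨⟨?_, h2⟩, hb, hb'⟩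
            rcases Nat.lt_or_ge i l with hil | hil
            · exfalso
              have hi : i = l - 1 := by omega
              rw [hbit i, if_pos hil, hi] at hb
              exact absurd hb (by simp [Nat.testBit_lt_two_pow he])
            · exact hil
          · rintro ⟨⟨h1, h2⟩, hb, hb'⟩
            exact ⟨⟨by omega, h2⟩, hb, hb'⟩
        rw [hIco]
        rw [f11_eq_card m m (Nat.lt_two_pow_self (n := m))]
        apply Finset.card_bij' (fun i _ => i - l) (fun j _ => j + l)
        · intro i hi
          simp only [Finset.mem_filter, Finset.mem_Ico] at hi
          simp only [Finset.mem_filter, Finset.mem_range]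
          obtain ⟨⟨h1, h2⟩, hb, hb'⟩ := hi
          rw [hbit i, if_neg (by omega)] at hb
          rw [hbit (i+1), if_neg (by omega)] at hb'
          have : i + 1 - l = i - l + 1 := by omega
          rw [this] at hb'
          exact ⟨by omega, hb, hb'⟩
        · intro j hj
          simp only [Finset.mem_filter, Finset.mem_range] at hj
          simp only [Finset.mem_filter, Finset.mem_Ico]
          obtain ⟨h1, hb, hb'⟩ := hj
          rw [hbit (j + l), if_neg (by omega)]
          rw [hbit (j + l + 1), if_neg (by omega)]
          have e1 : j + l - l = j := by omega
          have e2 : j + l + 1 - l = j + 1 := by omega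
          rw [e1, e2]
          exact ⟨⟨by omega, by omega⟩, hb, hb'⟩
        · intro i hi
          simp only [Finset.mem_filter, Finset.mem_Ico] at hi
          omega
        · intro j hj; omega
    · apply Finset.disjoint_filter_filter
      rw [Finset.range_eq_Ico]
      exact Finset.Ico_disjoint_Ico_consecutive 0 (l-1) N
  unfold r
  rw [key, pow_add, mul_comm]
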